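/- arXiv:2112.05515 — 5 statements merged into one kernel-verified Lean document; each statement's English description precedes it below -/
import Mathlib

section
/- Let M be a partial commutative monoid and cl a strong closure operator on P(M). Define on closed sets: EMP = cl({e}) and X * Y = cl(X • Y). Then (closed sets, *, EMP) forms a commutative monoid: * is commutative, associative, and EMP * X = X for all closed X. -/
/-- A partial commutative monoid: multiplication is partial (`Option`-valued). -/
structure PCM (M : Type) where
  mul : M → M → Option M
  e : M
  mul_comm : ∀ x y, mul x y = mul y x
  mul_unit : ∀ x, mul e x = some x
  mul_assoc : ∀ x y z a b, mul x y = some a → mul a z = some b →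
    ∃ c, mul y z = some c ∧ mul x c = some b

/-- `X • Y` on subsets of a PCM. -/
def PCM.sdot {M : Type} (P : PCM M) (X Y : Set M) : Set M :=
  {m | ∃ x ∈ X, ∃ y ∈ Y, P.mul x y = some m}

/-- `X —• Y` on subsets of a PCM. -/
def PCM.swand {M : Type} (P : PCM M) (X Y : Set M) : Set M :=
  {z | ∀ x ∈ X, ∀ m, P.mul z x = some m → m ∈ Y}

/-- A Moore closure operator on subsets of `M`. -/
structure MooreCl (M : Type) where
  cl : Set M → Set M
  le_cl : ∀ X, X ⊆ cl X
  mono : ∀ X Y : Set M, X ⊆ Y → cl X ⊆ cl Y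
  idem : ∀ X, cl (cl X) = cl X

lemma sdot_comm {M : Type} (P : PCM M) (X Y : Set M) : P.sdot X Y = P.sdot Y X := by
  ext m
  constructor <;> rintro ⟨x, hx, y, hy, h⟩ <;> exact ⟨y, hy, x, hx, (P.mul_comm y x).trans h⟩

lemma sdot_assoc {M : Type} (P : PCM M) (X Y Z : Set M) :
    P.sdot (P.sdot X Y) Z = P.sdot X (P.sdot Y Z) := by
  ext m
  constructor
  · rintro ⟨a, ⟨x, hx, y, hy, hxy⟩, z, hz, haz⟩
    obtain ⟨c, hc1, hc2⟩ := P.mul_assoc x y z a m hxy haz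
    exact ⟨x, hx, c, ⟨y, hy, z, hz, hc1⟩, hc2⟩
  · rintro ⟨x, hx, cc, ⟨y, hy, z, hz, hyz⟩, hxc⟩
    obtain ⟨d, hd1, hd2⟩ := P.mul_assoc y z x cc m hyz ((P.mul_comm cc x).trans hxc)
    obtain ⟨a, ha1, ha2⟩ := P.mul_assoc z x y d m hd1 ((P.mul_comm d y).trans hd2)
    exact ⟨a, ⟨x, hx, y, hy, ha1⟩, z, hz, (P.mul_comm a z).trans ha2⟩

lemma sdot_unit {M : Type} (P : PCM M) (X : Set M) : P.sdot {P.e} X = X := by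
  ext m
  constructor
  · rintro ⟨x, hx, y, hy, h⟩
    rw [Set.mem_singleton_iff] at hx
    subst hx
    rw [P.mul_unit y] at h
    cases h; exact hy
  · intro hm
    exact ⟨P.e, rfl, m, hm, P.mul_unit m⟩

/-- `cl (cl X • Y) = cl (X • Y)` from strongness. -/
lemma cl_sdot_cl_left {M : Type} (P : PCM M) (c : MooreCl M)
    (strong : ∀ X Y : Set M, P.sdot (c.cl X) Y ⊆ c.cl (P.sdot X Y))
    (X Y : Set M) : c.cl (P.sdot (c.cl X) Y) = c.cl (P.sdot X Y) := by
  apply Set.Subset.antisymm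
  · have := c.mono _ _ (strong X Y)
    rwa [c.idem] at this
  · apply c.mono
    intro m ⟨x, hx, y, hy, h⟩
    exact ⟨x, c.le_cl X hx, y, hy, h⟩

/-- closed sets with `X * Y = cl (X • Y)` and unit `cl {e}` form a
commutative monoid. -/
theorem lifted_sep_comm_monoid {M : Type} (P : PCM M) (c : MooreCl M)
    (strong : ∀ X Y : Set M, P.sdot (c.cl X) Y ⊆ c.cl (P.sdot X Y)) :
    (∀ X Y : Set M, c.cl X = X → c.cl Y = Y →
        c.cl (P.sdot X Y) = c.cl (P.sdot Y X)) ∧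
    (∀ X Y Z : Set M, c.cl X = X → c.cl Y = Y → c.cl Z = Z →
        c.cl (P.sdot (c.cl (P.sdot X Y)) Z) = c.cl (P.sdot X (c.cl (P.sdot Y Z)))) ∧
    (∀ X : Set M, c.cl X = X → c.cl (P.sdot (c.cl {P.e}) X) = X) := by
  have cl_right : ∀ X Y : Set M, c.cl (P.sdot X (c.cl Y)) = c.cl (P.sdot X Y) := by
    intro X Y
    rw [sdot_comm P X (c.cl Y), cl_sdot_cl_left P c strong, sdot_comm]
  refine ⟨?_, ?_, ?_⟩
  · intro X Y _ _; rw [sdot_comm]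
  · intro X Y Z _ _ _
    rw [cl_sdot_cl_left P c strong, cl_right, sdot_assoc]
  · intro X hX
    rw [cl_sdot_cl_left P c strong, sdot_unit, hX]
end

section
/- In the cut-free BI sequent calculus, the rule inverting (-*R) is admissible: if Δ ⊢ φ -* ψ is cut-free derivable, then Δ , φ ⊢ ψ is cut-free derivable. -/
/-- Formulas of BI. -/
inductive Frml : Type
  | atom : Nat → Frml
  | top : Frml
  | bot : Frml
  | emp : Frml
  | and : Frml → Frml → Frml
  | or : Frml → Frml → Frml
  | imp : Frml → Frml → Frml
  | sep : Frml → Frml → Frml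
  | wand : Frml → Frml → Frml

/-- Bunches: trees with formula leaves, multiplicative/additive units and nodes. -/
inductive Bunch : Type
  | frml : Frml → Bunch
  | mempty : Bunch    -- ∅ₘ
  | aempty : Bunch    -- ∅ₐ
  | comma : Bunch → Bunch → Bunch   -- multiplicative ','
  | semic : Bunch → Bunch → Bunch   -- additive ';'

/-- Bunched contexts: bunches with a single hole. -/
inductive BCtx : Type
  | hole : BCtx
  | commaL : BCtx → Bunch → BCtx
  | commaR : Bunch → BCtx → BCtx
  | semicL : BCtx → Bunch → BCtx
  | semicR : Bunch → BCtx → BCtx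

/-- Filling the hole of a bunched context with a bunch. -/
def BCtx.fill : BCtx → Bunch → Bunch
  | .hole, Δ => Δ
  | .commaL C Γ, Δ => .comma (C.fill Δ) Γ
  | .commaR Γ C, Δ => .comma Γ (C.fill Δ)
  | .semicL C Γ, Δ => .semic (C.fill Δ) Γ
  | .semicR Γ C, Δ => .semic Γ (C.fill Δ)

/-- Equivalence of bunches: commutative-monoid laws for (',', ∅ₘ) and (';', ∅ₐ),
under arbitrary bunched contexts. -/
inductive BEquiv : Bunch → Bunch → Prop
  | refl (Δ : Bunch) : BEquiv Δ Δ
  | symm {Δ Δ' : Bunch} : BEquiv Δ Δ' → BEquiv Δ' Δ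
  | trans {Δ₁ Δ₂ Δ₃ : Bunch} : BEquiv Δ₁ Δ₂ → BEquiv Δ₂ Δ₃ → BEquiv Δ₁ Δ₃
  | commaComm (Δ₁ Δ₂ : Bunch) : BEquiv (.comma Δ₁ Δ₂) (.comma Δ₂ Δ₁)
  | semicComm (Δ₁ Δ₂ : Bunch) : BEquiv (.semic Δ₁ Δ₂) (.semic Δ₂ Δ₁)
  | commaAssoc (Δ₁ Δ₂ Δ₃ : Bunch) :
      BEquiv (.comma Δ₁ (.comma Δ₂ Δ₃)) (.comma (.comma Δ₁ Δ₂) Δ₃)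
  | semicAssoc (Δ₁ Δ₂ Δ₃ : Bunch) :
      BEquiv (.semic Δ₁ (.semic Δ₂ Δ₃)) (.semic (.semic Δ₁ Δ₂) Δ₃)
  | commaUnit (Δ : Bunch) : BEquiv (.comma Δ .mempty) Δ
  | semicUnit (Δ : Bunch) : BEquiv (.semic Δ .aempty) Δ
  | ctx (C : BCtx) {Δ Δ' : Bunch} : BEquiv Δ Δ' → BEquiv (C.fill Δ) (C.fill Δ')

/-- Cut-free sequent calculus for BI, with the axiom rule restricted to atoms. -/
inductive Proves : Bunch → Frml → Prop
  | ax (a : Nat) : Proves (.frml (.atom a)) (.atom a)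
  | equiv {Δ Δ' : Bunch} {φ : Frml} :
      Proves Δ' φ → BEquiv Δ Δ' → Proves Δ φ
  | weaken (C : BCtx) {Δ₁ Δ₂ : Bunch} {φ : Frml} :
      Proves (C.fill Δ₁) φ → Proves (C.fill (.semic Δ₁ Δ₂)) φ
  | contract (C : BCtx) {Δ₁ : Bunch} {φ : Frml} :
      Proves (C.fill (.semic Δ₁ Δ₁)) φ → Proves (C.fill Δ₁) φ
  | empR : Proves .mempty .emp
  | empL (C : BCtx) {φ : Frml} :
      Proves (C.fill .mempty) φ → Proves (C.fill (.frml .emp)) φ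
  | sepR {Δ₁ Δ₂ : Bunch} {φ ψ : Frml} :
      Proves Δ₁ φ → Proves Δ₂ ψ → Proves (.comma Δ₁ Δ₂) (.sep φ ψ)
  | sepL (C : BCtx) {φ ψ χ : Frml} :
      Proves (C.fill (.comma (.frml φ) (.frml ψ))) χ →
      Proves (C.fill (.frml (.sep φ ψ))) χ
  | wandR {Δ : Bunch} {φ ψ : Frml} :
      Proves (.comma Δ (.frml φ)) ψ → Proves Δ (.wand φ ψ)
  | wandL (C : BCtx) {Δ₁ Δ₂ : Bunch} {φ ψ χ : Frml} :
      Proves Δ₁ φ → Proves (C.fill (.comma Δ₂ (.frml ψ))) χ →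
      Proves (C.fill (.comma (.comma Δ₁ Δ₂) (.frml (.wand φ ψ)))) χ
  | topR : Proves .aempty .top
  | topL (C : BCtx) {φ : Frml} :
      Proves (C.fill .aempty) φ → Proves (C.fill (.frml .top)) φ
  | andR {Δ₁ Δ₂ : Bunch} {φ ψ : Frml} :
      Proves Δ₁ φ → Proves Δ₂ ψ → Proves (.semic Δ₁ Δ₂) (.and φ ψ)
  | andL (C : BCtx) {φ ψ χ : Frml} :
      Proves (C.fill (.semic (.frml φ) (.frml ψ))) χ →
      Proves (C.fill (.frml (.and φ ψ))) χ
  | impR {Δ : Bunch} {φ ψ : Frml} :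
      Proves (.semic Δ (.frml φ)) ψ → Proves Δ (.imp φ ψ)
  | impL (C : BCtx) {Δ₁ Δ₂ : Bunch} {φ ψ χ : Frml} :
      Proves Δ₁ φ → Proves (C.fill (.semic Δ₂ (.frml ψ))) χ →
      Proves (C.fill (.semic (.semic Δ₁ Δ₂) (.frml (.imp φ ψ)))) χ
  | botL (C : BCtx) {φ : Frml} : Proves (C.fill (.frml .bot)) φ
  | orR1 {Δ : Bunch} {φ ψ : Frml} : Proves Δ φ → Proves Δ (.or φ ψ)
  | orR2 {Δ : Bunch} {φ ψ : Frml} : Proves Δ ψ → Proves Δ (.or φ ψ)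
  | orL (C : BCtx) {φ ψ χ : Frml} :
      Proves (C.fill (.frml φ)) χ → Proves (C.fill (.frml ψ)) χ →
      Proves (C.fill (.frml (.or φ ψ))) χ

/-- The formula collapse `⟨Δ⟩` of a bunch. -/
def Bunch.collapse : Bunch → Frml
  | .frml φ => φ
  | .mempty => .emp
  | .aempty => .top
  | .comma Δ₁ Δ₂ => .sep Δ₁.collapse Δ₂.collapse
  | .semic Δ₁ Δ₂ => .and Δ₁.collapse Δ₂.collapse


theorem wandR_inv_aux : ∀ {Δ : Bunch} {χ : Frml}, Proves Δ χ → ∀ {φ ψ : Frml},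
    χ = .wand φ ψ → Proves (.comma Δ (.frml φ)) ψ := by
  intro Δ χ h
  induction h with
  | ax a => intro _ _ h; cases h
  | equiv _ e ih =>
    intro φ ψ h
    exact .equiv (ih h) (.ctx (.commaL .hole (.frml φ)) e)
  | weaken C _ ih => intro φ ψ h; exact .weaken (C.commaL (.frml φ)) (ih h)
  | contract C _ ih => intro φ ψ h; exact .contract (C.commaL (.frml φ)) (ih h)
  | empR => intro _ _ h; cases h
  | empL C _ ih => intro φ ψ h; exact .empL (C.commaL (.frml φ)) (ih h)
  | sepR _ _ _ _ => intro _ _ h; cases h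
  | sepL C _ ih => intro φ ψ h; exact .sepL (C.commaL (.frml φ)) (ih h)
  | wandR p _ =>
    intro φ ψ h
    injection h with h1 h2
    subst h1; subst h2
    exact p
  | wandL C p1 _ _ ih2 =>
    intro φ ψ h
    exact .wandL (C.commaL (.frml φ)) p1 (ih2 h)
  | topR => intro _ _ h; cases h
  | topL C _ ih => intro φ ψ h; exact .topL (C.commaL (.frml φ)) (ih h)
  | andR _ _ _ _ => intro _ _ h; cases h
  | andL C _ ih => intro φ ψ h; exact .andL (C.commaL (.frml φ)) (ih h)
  | impR _ _ => intro _ _ h; cases h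
  | impL C p1 _ _ ih2 =>
    intro φ ψ h
    exact .impL (C.commaL (.frml φ)) p1 (ih2 h)
  | botL C => intro φ ψ h; exact .botL (C.commaL (.frml φ))
  | orR1 _ _ => intro _ _ h; cases h
  | orR2 _ _ => intro _ _ h; cases h
  | orL C _ _ ih1 ih2 =>
    intro φ ψ h
    exact .orL (C.commaL (.frml φ)) (ih1 h) (ih2 h)

/-- invertibility of the (-*R) rule in the cut-free calculus. -/
theorem wandR_inv {Δ : Bunch} {φ ψ : Frml} :
    Proves Δ (.wand φ ψ) → Proves (.comma Δ (.frml φ)) ψ := fun h => wandR_inv_aux h rfl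
end

section
/- In the cut-free BI sequent calculus, the rule inverting (→R) is admissible: if Δ ⊢ φ → ψ is cut-free derivable, then Δ ; φ ⊢ ψ is cut-free derivable. -/
/-- invertibility of the (→R) rule in the cut-free calculus. -/
theorem implR_inv {Δ : Bunch} {φ ψ : Frml} :
    Proves Δ (.imp φ ψ) → Proves (.semic Δ (.frml φ)) ψ := by
  intro h
  generalize hχ : Frml.imp φ ψ = χ at h
  induction h generalizing φ ψ with
  | ax a => cases hχ
  | equiv h hb ih =>
      exact .equiv (ih hχ) (.ctx (.semicL .hole (.frml φ)) hb)
  | weaken C h ih => exact Proves.weaken (.semicL C (.frml φ)) (ih hχ)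
  | contract C h ih => exact Proves.contract (.semicL C (.frml φ)) (ih hχ)
  | empR => cases hχ
  | empL C h ih => exact Proves.empL (.semicL C (.frml φ)) (ih hχ)
  | sepR h1 h2 ih1 ih2 => cases hχ
  | sepL C h ih => exact Proves.sepL (.semicL C (.frml φ)) (ih hχ)
  | wandR h ih => cases hχ
  | wandL C h1 h2 ih1 ih2 =>
      exact Proves.wandL (.semicL C (.frml φ)) h1 (ih2 hχ)
  | topR => cases hχ
  | topL C h ih => exact Proves.topL (.semicL C (.frml φ)) (ih hχ)
  | andR h1 h2 ih1 ih2 => cases hχ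
  | andL C h ih => exact Proves.andL (.semicL C (.frml φ)) (ih hχ)
  | impR h ih => cases hχ; exact h
  | impL C h1 h2 ih1 ih2 =>
      exact Proves.impL (.semicL C (.frml φ)) h1 (ih2 hχ)
  | botL C => exact Proves.botL (.semicL C (.frml φ))
  | orR1 h ih => cases hχ
  | orR2 h ih => cases hχ
  | orL C h1 h2 ih1 ih2 =>
      exact Proves.orL (.semicL C (.frml φ)) (ih1 hχ) (ih2 hχ)
end

section
/- In the cut-free BI sequent calculus, the following rule is admissible: if Δ'(⟨Δ⟩) ⊢ χ is cut-free derivable, then Δ'(Δ) ⊢ χ is cut-free derivable, where ⟨Δ⟩ is the formula obtained from the bunch Δ by replacing ',' with *, ';' with ∧, ∅ₘ with emp, and ∅ₐ with ⊤. -/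
deriving instance DecidableEq for Frml

/-- Composition of bunched contexts. -/
def BCtx.comp : BCtx → BCtx → BCtx
  | .hole, D => D
  | .commaL C Γ, D => .commaL (C.comp D) Γ
  | .commaR Γ C, D => .commaR Γ (C.comp D)
  | .semicL C Γ, D => .semicL (C.comp D) Γ
  | .semicR Γ C, D => .semicR Γ (C.comp D)

theorem comp_fill (C D : BCtx) (Θ : Bunch) :
    (C.comp D).fill Θ = C.fill (D.fill Θ) := by
  induction C <;> simp [BCtx.comp, BCtx.fill, *]

/-- Substitute every leaf `frml φ₀` by `Δ₀` in a bunch. -/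
def substB (φ₀ : Frml) (Δ₀ : Bunch) : Bunch → Bunch
  | .frml ψ => if ψ = φ₀ then Δ₀ else .frml ψ
  | .mempty => .mempty
  | .aempty => .aempty
  | .comma a b => .comma (substB φ₀ Δ₀ a) (substB φ₀ Δ₀ b)
  | .semic a b => .semic (substB φ₀ Δ₀ a) (substB φ₀ Δ₀ b)

/-- Substitute every leaf `frml φ₀` by `Δ₀` in a bunched context. -/
def substC (φ₀ : Frml) (Δ₀ : Bunch) : BCtx → BCtx
  | .hole => .hole
  | .commaL C Γ => .commaL (substC φ₀ Δ₀ C) (substB φ₀ Δ₀ Γ)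
  | .commaR Γ C => .commaR (substB φ₀ Δ₀ Γ) (substC φ₀ Δ₀ C)
  | .semicL C Γ => .semicL (substC φ₀ Δ₀ C) (substB φ₀ Δ₀ Γ)
  | .semicR Γ C => .semicR (substB φ₀ Δ₀ Γ) (substC φ₀ Δ₀ C)

theorem subst_fill (φ₀ : Frml) (Δ₀ : Bunch) (C : BCtx) (Θ : Bunch) :
    substB φ₀ Δ₀ (C.fill Θ) = (substC φ₀ Δ₀ C).fill (substB φ₀ Δ₀ Θ) := by
  induction C <;> simp [substC, substB, BCtx.fill, *]

/-- Easy direction: a bunch may be collapsed to its formula using left rules. -/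
theorem collapseL (χ : Frml) : ∀ (Δ : Bunch) (D : BCtx),
    Proves (D.fill Δ) χ → Proves (D.fill (.frml Δ.collapse)) χ
  | .frml φ, D, h => h
  | .mempty, D, h => .empL D h
  | .aempty, D, h => .topL D h
  | .comma Δ₁ Δ₂, D, h => by
    have h1 := collapseL χ Δ₁ (D.comp (.commaL .hole Δ₂)) (by rwa [comp_fill])
    rw [comp_fill] at h1
    have h2 := collapseL χ Δ₂ (D.comp (.commaR (.frml Δ₁.collapse) .hole))
      (by rwa [comp_fill])
    rw [comp_fill] at h2
    exact .sepL D h2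
  | .semic Δ₁ Δ₂, D, h => by
    have h1 := collapseL χ Δ₁ (D.comp (.semicL .hole Δ₂)) (by rwa [comp_fill])
    rw [comp_fill] at h1
    have h2 := collapseL χ Δ₂ (D.comp (.semicR (.frml Δ₁.collapse) .hole))
      (by rwa [comp_fill])
    rw [comp_fill] at h2
    exact .andL D h2

/-- The four admissible one-step "unfoldings" of a formula into a bunch. -/
inductive Good : Frml → Bunch → Prop
  | emp : Good .emp .mempty
  | top : Good .top .aempty
  | sep (φ ψ : Frml) : Good (.sep φ ψ) (.comma (.frml φ) (.frml ψ))
  | and (φ ψ : Frml) : Good (.and φ ψ) (.semic (.frml φ) (.frml ψ))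

theorem Good.collapse {φ₀ : Frml} {Δ₀ : Bunch} (g : Good φ₀ Δ₀) :
    Δ₀.collapse = φ₀ := by cases g <;> rfl

theorem fixup {φ₀ : Frml} {Δ₀ : Bunch} (g : Good φ₀ Δ₀) (ψ : Frml) (D : BCtx) (χ : Frml)
    (h : Proves (D.fill (substB φ₀ Δ₀ (.frml ψ))) χ) : Proves (D.fill (.frml ψ)) χ := by
  by_cases e : ψ = φ₀
  · subst e
    rw [show substB ψ Δ₀ (.frml ψ) = Δ₀ by simp [substB]] at h
    have := collapseL χ Δ₀ D h
    rwa [g.collapse] at this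
  · rwa [show substB φ₀ Δ₀ (.frml ψ) = .frml ψ by simp [substB, e]] at h

theorem substEquiv (φ₀ : Frml) (Δ₀ : Bunch) {Δ Δ' : Bunch} (h : BEquiv Δ Δ') :
    BEquiv (substB φ₀ Δ₀ Δ) (substB φ₀ Δ₀ Δ') := by
  induction h with
  | refl => exact .refl _
  | symm _ ih => exact ih.symm
  | trans _ _ ih1 ih2 => exact ih1.trans ih2
  | commaComm => exact .commaComm _ _
  | semicComm => exact .semicComm _ _
  | commaAssoc => exact .commaAssoc _ _ _
  | semicAssoc => exact .semicAssoc _ _ _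
  | commaUnit Δ => exact .commaUnit _
  | semicUnit Δ => exact .semicUnit _
  | ctx C _ ih => rw [subst_fill, subst_fill]; exact .ctx _ ih

theorem unsubstB {φ₀ : Frml} {Δ₀ : Bunch} (g : Good φ₀ Δ₀) (χ : Frml) :
    ∀ (Γ : Bunch) (D : BCtx),
    Proves (D.fill (substB φ₀ Δ₀ Γ)) χ → Proves (D.fill Γ) χ
  | .frml ψ, D, h => fixup g ψ D χ h
  | .mempty, D, h => h
  | .aempty, D, h => h
  | .comma Γ₁ Γ₂, D, h => by
    have h1 := unsubstB g χ Γ₁ (D.comp (.commaL .hole (substB φ₀ Δ₀ Γ₂)))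
      (by rwa [comp_fill])
    rw [comp_fill] at h1
    have h2 := unsubstB g χ Γ₂ (D.comp (.commaR Γ₁ .hole)) (by rwa [comp_fill])
    rwa [comp_fill] at h2
  | .semic Γ₁ Γ₂, D, h => by
    have h1 := unsubstB g χ Γ₁ (D.comp (.semicL .hole (substB φ₀ Δ₀ Γ₂)))
      (by rwa [comp_fill])
    rw [comp_fill] at h1
    have h2 := unsubstB g χ Γ₂ (D.comp (.semicR Γ₁ .hole)) (by rwa [comp_fill])
    rwa [comp_fill] at h2

theorem unsubstC {φ₀ : Frml} {Δ₀ : Bunch} (g : Good φ₀ Δ₀) (χ : Frml) :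
    ∀ (C : BCtx) (Θ : Bunch) (D : BCtx),
    Proves (D.fill ((substC φ₀ Δ₀ C).fill Θ)) χ → Proves (D.fill (C.fill Θ)) χ
  | .hole, Θ, D, h => h
  | .commaL C₁ Γ, Θ, D, h => by
    have h1 := unsubstB g χ Γ (D.comp (.commaR ((substC φ₀ Δ₀ C₁).fill Θ) .hole))
      (by rw [comp_fill]; exact h)
    rw [comp_fill] at h1
    have h2 := unsubstC g χ C₁ Θ (D.comp (.commaL .hole Γ)) (by rwa [comp_fill])
    rwa [comp_fill] at h2
  | .commaR Γ C₁, Θ, D, h => by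
    have h1 := unsubstB g χ Γ (D.comp (.commaL .hole ((substC φ₀ Δ₀ C₁).fill Θ)))
      (by rw [comp_fill]; exact h)
    rw [comp_fill] at h1
    have h2 := unsubstC g χ C₁ Θ (D.comp (.commaR Γ .hole)) (by rwa [comp_fill])
    rwa [comp_fill] at h2
  | .semicL C₁ Γ, Θ, D, h => by
    have h1 := unsubstB g χ Γ (D.comp (.semicR ((substC φ₀ Δ₀ C₁).fill Θ) .hole))
      (by rw [comp_fill]; exact h)
    rw [comp_fill] at h1
    have h2 := unsubstC g χ C₁ Θ (D.comp (.semicL .hole Γ)) (by rwa [comp_fill])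
    rwa [comp_fill] at h2
  | .semicR Γ C₁, Θ, D, h => by
    have h1 := unsubstB g χ Γ (D.comp (.semicL .hole ((substC φ₀ Δ₀ C₁).fill Θ)))
      (by rw [comp_fill]; exact h)
    rw [comp_fill] at h1
    have h2 := unsubstC g χ C₁ Θ (D.comp (.semicR Γ .hole)) (by rwa [comp_fill])
    rwa [comp_fill] at h2
theorem Frml.ne_sep_l (φ ψ : Frml) : φ ≠ .sep φ ψ := fun h => by
  have := congrArg sizeOf h; simp at this; all_goals omega

theorem Frml.ne_sep_r (φ ψ : Frml) : ψ ≠ .sep φ ψ := fun h => by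
  have := congrArg sizeOf h; simp at this

theorem Frml.ne_and_l (φ ψ : Frml) : φ ≠ .and φ ψ := fun h => by
  have := congrArg sizeOf h; simp at this; all_goals omega

theorem Frml.ne_and_r (φ ψ : Frml) : ψ ≠ .and φ ψ := fun h => by
  have := congrArg sizeOf h; simp at this

theorem substAdm {φ₀ : Frml} {Δ₀ : Bunch} (g : Good φ₀ Δ₀) {Γ : Bunch} {χ : Frml}
    (h : Proves Γ χ) : Proves (substB φ₀ Δ₀ Γ) χ := by
  induction h with
  | ax a =>
    have hn : Frml.atom a ≠ φ₀ := by cases g <;> simp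
    simp only [substB, hn, if_neg, ite_false]
    exact .ax a
  | equiv _ e ih => exact .equiv ih (substEquiv φ₀ Δ₀ e)
  | weaken C _ ih =>
    rw [subst_fill] at ih ⊢
    exact .weaken _ ih
  | contract C _ ih =>
    rw [subst_fill] at ih ⊢
    exact .contract _ ih
  | empR => exact .empR
  | empL C _ ih =>
    rw [subst_fill] at ih ⊢
    by_cases e : Frml.emp = φ₀
    · subst e; cases g
      simpa [substB] using ih
    · rw [show substB φ₀ Δ₀ (.frml .emp) = .frml .emp from by simp [substB, e]]
      exact .empL _ ih
  | sepR _ _ ih1 ih2 => exact .sepR ih1 ih2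
  | sepL C prem ih =>
    rename_i φ ψ χ'
    rw [subst_fill] at ih ⊢
    by_cases e : Frml.sep φ ψ = φ₀
    · subst e; cases g
      simp only [substB, Frml.ne_sep_l φ ψ, Frml.ne_sep_r φ ψ, ite_false, if_neg,
        if_pos rfl] at ih ⊢
      simpa [substB] using ih
    · have h1 := fixup g ψ ((substC φ₀ Δ₀ C).comp (.commaR (substB φ₀ Δ₀ (.frml φ)) .hole)) _
        (by rw [comp_fill]; exact ih)
      rw [comp_fill] at h1
      have h2 := fixup g φ ((substC φ₀ Δ₀ C).comp (.commaL .hole (.frml ψ))) _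
        (by rw [comp_fill]; exact h1)
      rw [comp_fill] at h2
      rw [show substB φ₀ Δ₀ (.frml (.sep φ ψ)) = .frml (.sep φ ψ) from by simp [substB, e]]
      exact .sepL _ h2
  | wandR prem ih =>
    rename_i Δ φ ψ
    have h1 := fixup g φ (.commaR (substB φ₀ Δ₀ Δ) .hole) _ ih
    exact .wandR h1
  | wandL C prem1 prem2 ih1 ih2 =>
    rename_i Δ₁ Δ₂ φ ψ χ'
    rw [subst_fill] at ih2 ⊢
    have h1 := fixup g ψ ((substC φ₀ Δ₀ C).comp (.commaR (substB φ₀ Δ₀ Δ₂) .hole)) _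
      (by rw [comp_fill]; exact ih2)
    rw [comp_fill] at h1
    have hn : Frml.wand φ ψ ≠ φ₀ := by cases g <;> simp
    have := Proves.wandL (substC φ₀ Δ₀ C) ih1 h1
    simpa [substB, hn] using this
  | topR => exact .topR
  | topL C _ ih =>
    rw [subst_fill] at ih ⊢
    by_cases e : Frml.top = φ₀
    · subst e; cases g
      simpa [substB] using ih
    · rw [show substB φ₀ Δ₀ (.frml .top) = .frml .top from by simp [substB, e]]
      exact .topL _ ih
  | andR _ _ ih1 ih2 => exact .andR ih1 ih2
  | andL C prem ih =>
    rename_i φ ψ χ'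
    rw [subst_fill] at ih ⊢
    by_cases e : Frml.and φ ψ = φ₀
    · subst e; cases g
      simp only [substB, Frml.ne_and_l φ ψ, Frml.ne_and_r φ ψ, ite_false, if_neg,
        if_pos rfl] at ih ⊢
      simpa [substB] using ih
    · have h1 := fixup g ψ ((substC φ₀ Δ₀ C).comp (.semicR (substB φ₀ Δ₀ (.frml φ)) .hole)) _
        (by rw [comp_fill]; exact ih)
      rw [comp_fill] at h1
      have h2 := fixup g φ ((substC φ₀ Δ₀ C).comp (.semicL .hole (.frml ψ))) _
        (by rw [comp_fill]; exact h1)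
      rw [comp_fill] at h2
      rw [show substB φ₀ Δ₀ (.frml (.and φ ψ)) = .frml (.and φ ψ) from by simp [substB, e]]
      exact .andL _ h2
  | impR prem ih =>
    rename_i Δ φ ψ
    have h1 := fixup g φ (.semicR (substB φ₀ Δ₀ Δ) .hole) _ ih
    exact .impR h1
  | impL C prem1 prem2 ih1 ih2 =>
    rename_i Δ₁ Δ₂ φ ψ χ'
    rw [subst_fill] at ih2 ⊢
    have h1 := fixup g ψ ((substC φ₀ Δ₀ C).comp (.semicR (substB φ₀ Δ₀ Δ₂) .hole)) _
      (by rw [comp_fill]; exact ih2)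
    rw [comp_fill] at h1
    have hn : Frml.imp φ ψ ≠ φ₀ := by cases g <;> simp
    have := Proves.impL (substC φ₀ Δ₀ C) ih1 h1
    simpa [substB, hn] using this
  | botL C =>
    rename_i φ
    rw [subst_fill]
    have hn : Frml.bot ≠ φ₀ := by cases g <;> simp
    rw [show substB φ₀ Δ₀ (.frml .bot) = .frml .bot from by simp [substB, hn]]
    exact .botL _
  | orR1 _ ih => exact .orR1 ih
  | orR2 _ ih => exact .orR2 ih
  | orL C prem1 prem2 ih1 ih2 =>
    rename_i φ ψ χ'
    rw [subst_fill] at ih1 ih2 ⊢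
    have h1 := fixup g φ (substC φ₀ Δ₀ C) _ ih1
    have h2 := fixup g ψ (substC φ₀ Δ₀ C) _ ih2
    have hn : Frml.or φ ψ ≠ φ₀ := by cases g <;> simp
    rw [show substB φ₀ Δ₀ (.frml (.or φ ψ)) = .frml (.or φ ψ) from by simp [substB, hn]]
    exact .orL _ h1 h2

/-- the collapse rule is admissible: from `Δ'(⟨Δ⟩) ⊢cf χ`
we get `Δ'(Δ) ⊢cf χ`. -/
theorem collapse_l_inv (C : BCtx) (Δ : Bunch) (χ : Frml) :
    Proves (C.fill (.frml Δ.collapse)) χ → Proves (C.fill Δ) χ := by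
  induction Δ generalizing C χ with
  | frml φ => exact id
  | mempty =>
    intro h
    have h2 := substAdm Good.emp h
    rw [subst_fill] at h2
    simp only [Bunch.collapse, substB, if_pos rfl] at h2
    exact unsubstC Good.emp χ C .mempty .hole h2
  | aempty =>
    intro h
    have h2 := substAdm Good.top h
    rw [subst_fill] at h2
    simp only [Bunch.collapse, substB, if_pos rfl] at h2
    exact unsubstC Good.top χ C .aempty .hole h2
  | comma Δ₁ Δ₂ ih1 ih2 =>
    intro h
    have h2 := substAdm (Good.sep Δ₁.collapse Δ₂.collapse) h
    rw [subst_fill] at h2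
    simp only [Bunch.collapse, substB, if_pos rfl] at h2
    have h3 := unsubstC (Good.sep Δ₁.collapse Δ₂.collapse) χ C
      (.comma (.frml Δ₁.collapse) (.frml Δ₂.collapse)) .hole h2
    have h4 := ih1 (C.comp (.commaL .hole (.frml Δ₂.collapse))) χ (by rw [comp_fill]; exact h3)
    rw [comp_fill] at h4
    have h5 := ih2 (C.comp (.commaR Δ₁ .hole)) χ (by rw [comp_fill]; exact h4)
    rwa [comp_fill] at h5
  | semic Δ₁ Δ₂ ih1 ih2 =>
    intro h
    have h2 := substAdm (Good.and Δ₁.collapse Δ₂.collapse) h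
    rw [subst_fill] at h2
    simp only [Bunch.collapse, substB, if_pos rfl] at h2
    have h3 := unsubstC (Good.and Δ₁.collapse Δ₂.collapse) χ C
      (.semic (.frml Δ₁.collapse) (.frml Δ₂.collapse)) .hole h2
    have h4 := ih1 (C.comp (.semicL .hole (.frml Δ₂.collapse))) χ (by rw [comp_fill]; exact h3)
    rw [comp_fill] at h4
    have h5 := ih2 (C.comp (.semicR Δ₁ .hole)) χ (by rw [comp_fill]; exact h4)
    rwa [comp_fill] at h5
end

section
/- In the Moore collection C of cut-free-closed sets of bunches, the meet of two closed sets satisfies X ∩ Y = cl({Δ ; Δ' | Δ ∈ X, Δ' ∈ Y}). -/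
/-- The principal closed set `⟦φ⟧ = {Δ | Δ ⊢cf φ}`. -/
def pr (φ : Frml) : Set Bunch := {Δ | Proves Δ φ}

/-- The Moore closure generated by the principal sets:
`cl X = ⋂ {⟦φ⟧ | X ⊆ ⟦φ⟧}`. -/
def clB (X : Set Bunch) : Set Bunch := ⋂₀ {Y | ∃ φ : Frml, Y = pr φ ∧ X ⊆ Y}

/-- A set of bunches is closed if it is a fixpoint of the closure operator. -/
def ClosedB (X : Set Bunch) : Prop := clB X = X

lemma mem_clB {S : Set Bunch} {b : Bunch} :
    b ∈ clB S ↔ ∀ φ : Frml, S ⊆ pr φ → Proves b φ := by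
  constructor
  · intro h φ hS
    exact h (pr φ) ⟨φ, rfl, hS⟩
  · rintro h Z ⟨φ, rfl, hS⟩
    exact h φ hS

/-- meets of closed sets:
`X ∩ Y = cl {Δ ; Δ' | Δ ∈ X, Δ' ∈ Y}`. -/
theorem meet_eq_cl_semic (X Y : Set Bunch) (hX : ClosedB X) (hY : ClosedB Y) :
    X ∩ Y = clB {b | ∃ Δ ∈ X, ∃ Δ' ∈ Y, b = Bunch.semic Δ Δ'} := by
  ext b
  constructor
  · rintro ⟨hbX, hbY⟩
    rw [mem_clB]
    intro φ hS
    have : Proves (Bunch.semic b b) φ := hS ⟨b, hbX, b, hbY, rfl⟩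
    exact Proves.contract BCtx.hole this
  · intro hb
    rw [mem_clB] at hb
    constructor
    · rw [← hX]
      rintro Z ⟨φ, rfl, hXφ⟩
      apply hb
      rintro _ ⟨Δ, hΔ, Δ', hΔ', rfl⟩
      exact Proves.weaken BCtx.hole (hXφ hΔ)
    · rw [← hY]
      rintro Z ⟨φ, rfl, hYφ⟩
      apply hb
      rintro _ ⟨Δ, hΔ, Δ', hΔ', rfl⟩
      exact Proves.equiv (Proves.weaken BCtx.hole (hYφ hΔ')) (BEquiv.semicComm Δ Δ')
end
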